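/- arXiv:2602.16260 — 2 statements merged into one kernel-verified Lean document; each statement's English description precedes it below -/
import Mathlib

section
/- Let N ≥ 1, let M be a real N×N symmetric matrix, and let λ > 0 satisfy λ·‖y‖² ≤ yᵀ M y for every y ∈ ℝ^N. Let α, β, k > 0 and 0 < p < q with k·p < 1 and k·q > 1, and let γ := Γ((1−k·p)/(q−p))·Γ((k·q−1)/(q−p)) / (α^k·Γ(k)·(q−p)) · (α/β)^((1−k·p)/(q−p)). Let T_c > 0, u₀max ≥ 0, ζ_v ≥ 0 and κ₁, …, κ_N, κ_v reals with κᵢ ≥ κ_v for all i, κ_v ≥ N·γ/(λ·T_c), and κ_v·ζ_v ≥ u₀max. Let u₀ : ℝ → ℝ with |u₀(t)| ≤ u₀max for all t. Suppose ṽ : ℝ → ℝ^N is such that for every t ∈ [0, T_c] and every index i, the i-th component of ṽ is differentiable at t with derivative ṽᵢ'(t) = −κᵢ·((α·|eᵢ(t)|^p + β·|eᵢ(t)|^q)^k + ζ_v)·sign(eᵢ(t)) − u₀(t), where e(t) := M ⬝ ṽ(t). Then there exists t* ∈ [0, T_c] with ṽ(t*) = 0. (The velocity observation error of the distributed fixed-time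 observer must reach the origin no later than the predefined time T_c = T_{c₁}, Theorem 3, velocity part.) -/
open Matrix Real MeasureTheory Set intervalIntegral

lemma real_beta (a b : ℝ) (ha : 0 < a) (hb : 0 < b) :
    ∫ x in (0:ℝ)..1, x ^ (a-1) * (1-x) ^ (b-1)
      = Real.Gamma a * Real.Gamma b / Real.Gamma (a+b) := by
  have hC := Complex.Gamma_mul_Gamma_eq_betaIntegral (s := (a:ℂ)) (t := (b:ℂ))
    (by simpa using ha) (by simpa using hb)
  have hbeta : Complex.betaIntegral a b
      = ((∫ x in (0:ℝ)..1, x ^ (a-1) * (1-x) ^ (b-1) : ℝ) : ℂ) := by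
    rw [Complex.betaIntegral, ← intervalIntegral.integral_ofReal]
    refine intervalIntegral.integral_congr fun x hx => ?_
    rw [Set.uIcc_of_le (by norm_num : (0:ℝ) ≤ 1)] at hx
    push_cast
    rw [Complex.ofReal_cpow hx.1 (a-1), Complex.ofReal_cpow (by linarith [hx.2]) (b-1)]
    push_cast
    ring
  have hne : (Complex.Gamma ((a:ℂ) + b)) ≠ 0 := by
    rw [← Complex.ofReal_add, Complex.Gamma_ofReal]
    exact_mod_cast (Real.Gamma_pos_of_pos (by linarith)).ne'
  rw [hbeta] at hC
  rw [← Complex.ofReal_add, Complex.Gamma_ofReal, Complex.Gamma_ofReal,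
      Complex.Gamma_ofReal] at hC
  have hR : Real.Gamma a * Real.Gamma b
      = Real.Gamma (a+b) * ∫ x in (0:ℝ)..1, x ^ (a-1) * (1-x) ^ (b-1) := by
    exact_mod_cast hC
  rw [eq_div_iff (Real.Gamma_pos_of_pos (show (0:ℝ) < a + b by linarith)).ne', hR]
  ring

lemma beta_Ioi (a b : ℝ) (ha : 0 < a) (hb : 0 < b) :
    ∫ u in Ioi (0:ℝ), u ^ (a-1) * (1+u) ^ (-(a+b))
      = Real.Gamma a * Real.Gamma b / Real.Gamma (a+b) := by
  set g : ℝ → ℝ := fun u => u ^ (a-1) * (1+u) ^ (-(a+b)) with hg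
  have hf' : ∀ x ∈ Ioo (0:ℝ) 1,
      HasDerivWithinAt (fun x => x / (1-x)) (((1-x)^2)⁻¹) (Ioo (0:ℝ) 1) x := by
    intro x hx
    have h1x : (1:ℝ) - x ≠ 0 := by have := hx.2; intro h; linarith [sub_eq_zero.mp h]
    have := (hasDerivAt_id x).div ((hasDerivAt_const x (1:ℝ)).sub (hasDerivAt_id x)) h1x
    exact (this.congr_deriv (show (1 * (1 - x) - x * (0 - 1)) / (1 - x) ^ 2 = ((1-x)^2)⁻¹ by ring)).hasDerivWithinAt
  have hinj : InjOn (fun x => x / (1-x)) (Ioo (0:ℝ) 1) := by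
    have : StrictMonoOn (fun x => x / (1-x)) (Ioo (0:ℝ) 1) := by
      intro x hx y hy hxy
      have h1 : (0:ℝ) < 1 - x := by linarith [hx.2]
      have h2 : (0:ℝ) < 1 - y := by linarith [hy.2]
      rw [div_lt_div_iff₀ h1 h2]
      nlinarith
    exact this.injOn
  have himg : (fun x => x / (1-x)) '' Ioo (0:ℝ) 1 = Ioi (0:ℝ) := by
    ext u; constructor
    · rintro ⟨x, hx, rfl⟩
      exact div_pos hx.1 (by linarith [hx.2])
    · intro hu
      refine ⟨u / (1+u), ⟨div_pos hu (by linarith [mem_Ioi.mp hu]), ?_⟩, ?_⟩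
      · rw [div_lt_one (by linarith [mem_Ioi.mp hu])]; linarith [mem_Ioi.mp hu]
      · have h1u : (1:ℝ) + u ≠ 0 := by have := mem_Ioi.mp hu; positivity
        field_simp
        ring
  have := MeasureTheory.integral_image_eq_integral_abs_deriv_smul
    measurableSet_Ioo hf' hinj g
  rw [himg] at this
  rw [this]
  have hcong : ∀ x ∈ Ioo (0:ℝ) 1,
      |((1-x)^2)⁻¹| • g (x / (1-x)) = x ^ (a-1) * (1-x) ^ (b-1) := by
    intro x hx
    have hx0 : (0:ℝ) < x := hx.1
    have h1x : (0:ℝ) < 1 - x := by linarith [hx.2]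
    have e1 : 1 + x/(1-x) = (1-x)⁻¹ := by field_simp; ring
    rw [smul_eq_mul, abs_of_pos (by positivity), hg]
    simp only [e1]
    have h2 : ((1-x)^2)⁻¹ = (1-x) ^ (-2:ℝ) := by
      rw [show (-2:ℝ) = -((2:ℕ):ℝ) by norm_num, Real.rpow_neg h1x.le, Real.rpow_natCast]
    have h3 : (x/(1-x))^(a-1) = x^(a-1) * (1-x)^(-(a-1)) := by
      rw [div_rpow hx0.le h1x.le, Real.rpow_neg h1x.le, div_eq_mul_inv]
    have h4 : ((1-x:ℝ)⁻¹)^(-(a+b)) = (1-x)^(a+b) := by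
      rw [Real.inv_rpow h1x.le, ← Real.rpow_neg h1x.le, neg_neg]
    have h5 : (1-x)^(-2:ℝ) * ((1-x)^(-(a-1)) * (1-x)^(a+b)) = (1-x)^(b-1) := by
      rw [← Real.rpow_add h1x, ← Real.rpow_add h1x]
      congr 1
      ring
    rw [h2, h3, h4,
      show (1-x)^(-2:ℝ) * (x^(a-1) * (1-x)^(-(a-1)) * (1-x)^(a+b))
        = x^(a-1) * ((1-x)^(-2:ℝ) * ((1-x)^(-(a-1)) * (1-x)^(a+b))) from by ring, h5]
  rw [MeasureTheory.setIntegral_congr_fun measurableSet_Ioo hcong,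
    ← MeasureTheory.integral_Ioc_eq_integral_Ioo,
    ← intervalIntegral.integral_of_le (by norm_num : (0:ℝ) ≤ 1)]
  exact real_beta a b ha hb

lemma main_integral (α β k p q : ℝ) (hα : 0 < α) (hβ : 0 < β) (hk : 0 < k)
    (hp : 0 < p) (hpq : p < q) (hkp : k*p < 1) (hkq : 1 < k*q) :
    ∫ s in Ioi (0:ℝ), ((α * s^p + β * s^q)^k)⁻¹
      = Real.Gamma ((1-k*p)/(q-p)) * Real.Gamma ((k*q-1)/(q-p)) /
        (α^k * Real.Gamma k * (q-p)) * (α/β)^((1-k*p)/(q-p)) := by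
  have hr : (0:ℝ) < q - p := by linarith
  set r := q - p with hrdef
  set a := (1-k*p)/r with hadef
  set b := (k*q-1)/r with hbdef
  have ha : 0 < a := div_pos (by linarith) hr
  have hb : 0 < b := div_pos (by linarith) hr
  have hab : a + b = k := by
    rw [hadef, hbdef, ← add_div, hrdef]
    rw [div_eq_iff (sub_pos.mpr hpq).ne']
    ring
  set f : ℝ → ℝ := fun s => ((α * s^p + β * s^q)^k)⁻¹ with hf
  set g : ℝ → ℝ := fun x => ((1/r) * x^(1/r-1)) * f (x^(1/r)) with hgdef
  have hc : (0:ℝ) < α/β := div_pos hα hβ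
  have step1 : ∫ s in Ioi (0:ℝ), f s = ∫ x in Ioi (0:ℝ), g x := by
    rw [← MeasureTheory.integral_comp_rpow_Ioi_of_pos (g:=f) (by positivity : (0:ℝ) < 1/r)]
    simp [hgdef, smul_eq_mul]
  have step2 : ∫ x in Ioi (0:ℝ), g x = (α/β) * ∫ x in Ioi (0:ℝ), g ((α/β) * x) := by
    have h2 := MeasureTheory.integral_comp_mul_left_Ioi g 0 hc
    simp only [mul_zero, smul_eq_mul] at h2
    rw [h2, ← mul_assoc, mul_inv_cancel₀ hc.ne', one_mul]
  have hpt : ∀ u ∈ Ioi (0:ℝ), g ((α/β) * u)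
      = ((1/r) * (α^k)⁻¹ * (α/β)^(a-1)) * (u^(a-1) * (1+u)^(-(a+b))) := by
    intro u hu
    have hu0 : (0:ℝ) < u := hu
    have hcu : (0:ℝ) < (α/β) * u := by positivity
    have h1u : (0:ℝ) < 1 + u := by linarith
    have e1 : (((α/β)*u)^(1/r))^p = ((α/β)*u)^(p/r) := by
      rw [← Real.rpow_mul hcu.le]
      congr 1
      ring
    have e2 : (((α/β)*u)^(1/r))^q = ((α/β)*u)^(p/r) * ((α/β)*u) := by
      rw [← Real.rpow_mul hcu.le,
        show (1/r)*q = p/r + 1 by rw [hrdef, div_add_one (sub_pos.mpr hpq).ne']; ring,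
        Real.rpow_add hcu, Real.rpow_one]
    have hbase : α * (((α/β)*u)^(1/r))^p + β * (((α/β)*u)^(1/r))^q
        = ((α/β)*u)^(p/r) * (α * (1+u)) := by
      rw [e1, e2]
      have : β * ((α/β)*u) = α * u := by field_simp
      linear_combination ((α/β*u)^(p/r)) * this
    have hfval : f (((α/β)*u)^(1/r))
        = (((α/β)*u)^((p/r)*k))⁻¹ * ((α^k)⁻¹ * ((1+u)^k)⁻¹) := by
      rw [hf]
      simp only
      rw [hbase, Real.mul_rpow (Real.rpow_nonneg hcu.le _) (by positivity),
        Real.mul_rpow hα.le h1u.le, ← Real.rpow_mul hcu.le]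
      rw [mul_inv, mul_inv]
    rw [hgdef]
    simp only
    rw [hfval]
    have hmerge : ((α/β)*u)^(1/r-1) * (((α/β)*u)^((p/r)*k))⁻¹ = ((α/β)*u)^(a-1) := by
      rw [← Real.rpow_neg hcu.le, ← Real.rpow_add hcu]
      congr 1
      rw [hadef, hrdef]
      field_simp
      ring
    have hsplit : ((α/β)*u)^(a-1) = (α/β)^(a-1) * u^(a-1) :=
      Real.mul_rpow hc.le hu0.le
    have hk1 : ((1+u)^k)⁻¹ = (1+u)^(-(a+b)) := by
      rw [hab, ← Real.rpow_neg h1u.le]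
    calc 1/r * ((α/β)*u)^(1/r-1) * ((((α/β)*u)^((p/r)*k))⁻¹ * ((α^k)⁻¹ * ((1+u)^k)⁻¹))
        = 1/r * (((α/β)*u)^(1/r-1) * (((α/β)*u)^((p/r)*k))⁻¹) * (α^k)⁻¹ * ((1+u)^k)⁻¹ := by
          ring
      _ = _ := by rw [hmerge, hsplit, hk1]; ring
  rw [step1, step2, MeasureTheory.setIntegral_congr_fun measurableSet_Ioi hpt,
    MeasureTheory.integral_const_mul, beta_Ioi a b ha hb, hab]
  have hcpow : (α/β)^a = (α/β)^(a-1) * (α/β) := by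
    rw [← Real.rpow_add_one hc.ne' (a-1)]
    norm_num
  rw [hcpow]
  have hαk : (0:ℝ) < α^k := Real.rpow_pos_of_pos hα k
  have hΓk : (0:ℝ) < Real.Gamma k := Real.Gamma_pos_of_pos hk
  field_simp

lemma main_integrable (α β k p q : ℝ) (hα : 0 < α) (hβ : 0 < β) (hk : 0 < k)
    (hp : 0 < p) (hpq : p < q) (hkp : k*p < 1) (hkq : 1 < k*q) :
    MeasureTheory.IntegrableOn (fun s => ((α * s^p + β * s^q)^k)⁻¹) (Ioi (0:ℝ)) := by
  by_contra hcon
  have h0 := MeasureTheory.integral_undef hcon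
  rw [main_integral α β k p q hα hβ hk hp hpq hkp hkq] at h0
  have hr : (0:ℝ) < q - p := by linarith
  have h1 : 0 < Real.Gamma ((1-k*p)/(q-p)) := Real.Gamma_pos_of_pos (div_pos (by linarith) hr)
  have h2 : 0 < Real.Gamma ((k*q-1)/(q-p)) := Real.Gamma_pos_of_pos (div_pos (by linarith) hr)
  have h3 : 0 < Real.Gamma k := Real.Gamma_pos_of_pos hk
  have h4 : 0 < α^k := Real.rpow_pos_of_pos hα k
  have h5 : 0 < (α/β)^((1-k*p)/(q-p)) := Real.rpow_pos_of_pos (div_pos hα hβ) _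
  have : 0 < Real.Gamma ((1-k*p)/(q-p)) * Real.Gamma ((k*q-1)/(q-p)) /
      (α^k * Real.Gamma k * (q-p)) * (α/β)^((1-k*p)/(q-p)) := by positivity
  linarith

lemma deriv_quadratic {N : ℕ} (M : Matrix (Fin N) (Fin N) ℝ) (hsymm : M.IsSymm)
    (v : ℝ → Fin N → ℝ) (t : ℝ) (D : Fin N → ℝ)
    (hd : ∀ i, HasDerivAt (fun s => v s i) (D i) t) :
    HasDerivAt (fun s => v s ⬝ᵥ M.mulVec (v s)) (2 * ∑ i, D i * M.mulVec (v t) i) t := by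
  have h1 : HasDerivAt (fun s => ∑ i, v s i * ∑ j, M i j * v s j)
      (∑ i, (D i * ∑ j, M i j * v t j + v t i * ∑ j, M i j * D j)) t := by
    apply HasDerivAt.fun_sum
    intro i _
    exact (hd i).mul (HasDerivAt.fun_sum fun j _ => (hd j).const_mul (M i j))
  have hfun : (fun s => v s ⬝ᵥ M.mulVec (v s))
      = fun s => ∑ i, v s i * ∑ j, M i j * v s j := by
    funext s
    simp [Matrix.mulVec, dotProduct]
  have hswap : ∑ i, v t i * ∑ j, M i j * D j = ∑ i, D i * M.mulVec (v t) i := by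
    simp_rw [Finset.mul_sum]
    rw [Finset.sum_comm]
    refine Finset.sum_congr rfl fun j _ => ?_
    simp only [Matrix.mulVec, dotProduct, Finset.mul_sum]
    refine Finset.sum_congr rfl fun i _ => ?_
    rw [← hsymm.apply j i]
    ring
  rw [hfun]
  convert h1 using 1
  rw [Finset.sum_add_distrib, hswap, two_mul]
  congr 1

section Phi

variable {α β k p q : ℝ}

lemma fcont (hα : 0 < α) (hβ : 0 < β) (hk : 0 < k) (hp : 0 < p) (hq : 0 < q) :
    ContinuousOn (fun s : ℝ => ((α * s^p + β * s^q)^k)⁻¹) (Ioi (0:ℝ)) := by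
  intro x hx
  have hx0 : (0:ℝ) < x := hx
  have h1 : ContinuousAt (fun s : ℝ => α * s^p + β * s^q) x :=
    ((continuousAt_const.mul (continuousAt_id.rpow_const (Or.inr hp.le))).add
      (continuousAt_const.mul (continuousAt_id.rpow_const (Or.inr hq.le))))
  have hbase : (0:ℝ) < α * x^p + β * x^q := by
    have := Real.rpow_pos_of_pos hx0 p
    have := Real.rpow_pos_of_pos hx0 q
    positivity
  have h2 : ContinuousAt (fun s : ℝ => (α * s^p + β * s^q)^k) x :=
    h1.rpow_const (Or.inl hbase.ne')
  exact (h2.inv₀ (Real.rpow_pos_of_pos hbase k).ne').continuousWithinAt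

lemma phi_hasDerivAt (hα : 0 < α) (hβ : 0 < β) (hk : 0 < k) (hp : 0 < p) (hpq : p < q)
    (hkp : k*p < 1) (hkq : 1 < k*q) {x : ℝ} (hx : 0 < x) :
    HasDerivAt (fun y => ∫ s in (0:ℝ)..y, ((α * s^p + β * s^q)^k)⁻¹)
      (((α * x^p + β * x^q)^k)⁻¹) x := by
  have hq : 0 < q := lt_trans hp hpq
  have hint : IntervalIntegrable (fun s : ℝ => ((α * s^p + β * s^q)^k)⁻¹) MeasureTheory.volume 0 x := by
    rw [intervalIntegrable_iff_integrableOn_Ioc_of_le hx.le]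
    exact (main_integrable α β k p q hα hβ hk hp hpq hkp hkq).mono_set Ioc_subset_Ioi_self
  have hcont := fcont hα hβ hk hp hq
  exact intervalIntegral.integral_hasDerivAt_right hint
    (hcont.stronglyMeasurableAtFilter isOpen_Ioi _ hx)
    (hcont.continuousAt (Ioi_mem_nhds hx))

lemma phi_pos (hα : 0 < α) (hβ : 0 < β) (hk : 0 < k) (hp : 0 < p) (hpq : p < q)
    (hkp : k*p < 1) (hkq : 1 < k*q) {x : ℝ} (hx : 0 < x) :
    0 < ∫ s in (0:ℝ)..x, ((α * s^p + β * s^q)^k)⁻¹ := by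
  have hq : 0 < q := lt_trans hp hpq
  have hint : IntervalIntegrable (fun s : ℝ => ((α * s^p + β * s^q)^k)⁻¹) MeasureTheory.volume 0 x := by
    rw [intervalIntegrable_iff_integrableOn_Ioc_of_le hx.le]
    exact (main_integrable α β k p q hα hβ hk hp hpq hkp hkq).mono_set Ioc_subset_Ioi_self
  refine intervalIntegral.intervalIntegral_pos_of_pos_on hint (fun s hs => ?_) hx
  have hs0 : (0:ℝ) < s := hs.1
  have : (0:ℝ) < α * s^p + β * s^q := by
    have := Real.rpow_pos_of_pos hs0 p
    have := Real.rpow_pos_of_pos hs0 q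
    positivity
  exact inv_pos.mpr (Real.rpow_pos_of_pos this k)

lemma phi_nonneg_ae (hα : 0 < α) (hβ : 0 < β) (hk : 0 < k) (hp : 0 < p) (hq : 0 < q) :
    ∀ s ∈ Ioi (0:ℝ), (0:ℝ) ≤ ((α * s^p + β * s^q)^k)⁻¹ := by
  intro s hs
  have hs0 : (0:ℝ) < s := hs
  have : (0:ℝ) < α * s^p + β * s^q := by
    have := Real.rpow_pos_of_pos hs0 p
    have := Real.rpow_pos_of_pos hs0 q
    positivity
  positivity

lemma phi_le (hα : 0 < α) (hβ : 0 < β) (hk : 0 < k) (hp : 0 < p) (hpq : p < q)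
    (hkp : k*p < 1) (hkq : 1 < k*q) {x : ℝ} (hx : 0 ≤ x) :
    (∫ s in (0:ℝ)..x, ((α * s^p + β * s^q)^k)⁻¹)
      ≤ Real.Gamma ((1-k*p)/(q-p)) * Real.Gamma ((k*q-1)/(q-p)) /
        (α^k * Real.Gamma k * (q-p)) * (α/β)^((1-k*p)/(q-p)) := by
  have hq : 0 < q := lt_trans hp hpq
  rw [intervalIntegral.integral_of_le hx, ← main_integral α β k p q hα hβ hk hp hpq hkp hkq]
  refine MeasureTheory.setIntegral_mono_set
    (main_integrable α β k p q hα hβ hk hp hpq hkp hkq)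
    ((MeasureTheory.ae_restrict_iff' measurableSet_Ioi).mpr
      (MeasureTheory.ae_of_all _ (phi_nonneg_ae hα hβ hk hp hq)))
    (HasSubset.Subset.eventuallyLE Ioc_subset_Ioi_self)
  done

end Phi

set_option maxHeartbeats 2000000 in
/-- Theorem 3, velocity part: under the parameter conditions of Theorem 3, the
velocity observation error of the distributed fixed-time observer reaches the
origin no later than the predefined time `T_c`. -/
theorem observer_velocity_reaches_origin
    (N : ℕ) (hN : 1 ≤ N) (M : Matrix (Fin N) (Fin N) ℝ) (hsymm : M.IsSymm)
    (lam : ℝ) (hlam : 0 < lam)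
    (hquad : ∀ y : Fin N → ℝ, lam * (y ⬝ᵥ y) ≤ y ⬝ᵥ M.mulVec y)
    (α β k p q : ℝ) (hα : 0 < α) (hβ : 0 < β) (hk : 0 < k)
    (hp : 0 < p) (hpq : p < q) (hkp : k * p < 1) (hkq : 1 < k * q)
    (γ : ℝ)
    (hγ : γ = Real.Gamma ((1 - k * p) / (q - p)) * Real.Gamma ((k * q - 1) / (q - p)) /
        (α ^ k * Real.Gamma k * (q - p)) * (α / β) ^ ((1 - k * p) / (q - p)))
    (Tc : ℝ) (hTc : 0 < Tc)
    (u₀max : ℝ) (hu₀max : 0 ≤ u₀max) (ζv : ℝ) (hζv : 0 ≤ ζv)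
    (κs : Fin N → ℝ) (κv : ℝ) (hκs : ∀ i, κv ≤ κs i)
    (hκv : (N : ℝ) * γ / (lam * Tc) ≤ κv)
    (hκζ : u₀max ≤ κv * ζv)
    (u₀ : ℝ → ℝ) (hu₀ : ∀ t, |u₀ t| ≤ u₀max)
    (v : ℝ → Fin N → ℝ)
    (hderiv : ∀ t ∈ Set.Icc (0 : ℝ) Tc, ∀ i : Fin N,
      HasDerivAt (fun s => v s i)
        (-(κs i) * ((α * |M.mulVec (v t) i| ^ p + β * |M.mulVec (v t) i| ^ q) ^ k + ζv) *
            Real.sign (M.mulVec (v t) i) - u₀ t) t) :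
    ∃ tstar ∈ Set.Icc (0 : ℝ) Tc, v tstar = 0 := by
  by_contra hcon
  push_neg at hcon
  have hq : 0 < q := hp.trans hpq
  have hr : (0:ℝ) < q - p := by linarith
  have hγpos : 0 < γ := by
    rw [hγ]
    have h1 : 0 < Real.Gamma ((1-k*p)/(q-p)) := Real.Gamma_pos_of_pos (div_pos (by linarith) hr)
    have h2 : 0 < Real.Gamma ((k*q-1)/(q-p)) := Real.Gamma_pos_of_pos (div_pos (by linarith) hr)
    have h3 : 0 < Real.Gamma k := Real.Gamma_pos_of_pos hk
    have h4 : 0 < α^k := Real.rpow_pos_of_pos hα k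
    have h5 : 0 < (α/β)^((1-k*p)/(q-p)) := Real.rpow_pos_of_pos (div_pos hα hβ) _
    exact mul_pos (div_pos (mul_pos h1 h2) (mul_pos (mul_pos h4 h3) hr)) h5
  have hNpos : (0:ℝ) < N := by exact_mod_cast Nat.lt_of_lt_of_le Nat.zero_lt_one hN
  have hκv0 : 0 < κv :=
    lt_of_lt_of_le (div_pos (mul_pos hNpos hγpos) (mul_pos hlam hTc)) hκv
  set e : ℝ → Fin N → ℝ := fun t => M.mulVec (v t) with he
  set g₀ : ℝ → ℝ := fun x => (α * x^p + β * x^q)^k with hg₀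
  set φ : ℝ → ℝ := fun x => ∫ s in (0:ℝ)..x, ((α * s^p + β * s^q)^k)⁻¹ with hφ
  set W : ℝ → ℝ := fun t => v t ⬝ᵥ M.mulVec (v t) with hWdef
  have hc₀pos : (0:ℝ) < lam / N := div_pos hlam hNpos
  set c₀ : ℝ := lam / N with hc₀
  set S : ℝ → ℝ := fun t => Real.sqrt (c₀ * W t) with hSdef
  set D : ℝ → Fin N → ℝ := fun t i =>
    -(κs i) * ((α * |e t i| ^ p + β * |e t i| ^ q) ^ k + ζv) * Real.sign (e t i) - u₀ t with hD
  set A : ℝ → ℝ := fun t => ∑ i, D t i * e t i with hA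
  have hWpos : ∀ t ∈ Set.Icc (0:ℝ) Tc, 0 < W t := by
    intro t ht
    have hv : v t ≠ 0 := hcon t ht
    have hvv : 0 < v t ⬝ᵥ v t := by
      rcases Function.ne_iff.mp hv with ⟨i, hi⟩
      have hnn : ∀ j ∈ Finset.univ, (0:ℝ) ≤ v t j * v t j := fun j _ => mul_self_nonneg _
      calc (0:ℝ) < v t i * v t i := mul_self_pos.mpr hi
        _ ≤ ∑ j, v t j * v t j := Finset.single_le_sum hnn (Finset.mem_univ i)
        _ = v t ⬝ᵥ v t := rfl
    calc (0:ℝ) < lam * (v t ⬝ᵥ v t) := mul_pos hlam hvv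
      _ ≤ W t := hquad (v t)
  have hSnn : ∀ t, 0 ≤ S t := fun t => Real.sqrt_nonneg _
  have hSpos : ∀ t ∈ Set.Icc (0:ℝ) Tc, 0 < S t := fun t ht =>
    Real.sqrt_pos.mpr (mul_pos hc₀pos (hWpos t ht))
  have hg₀nn : ∀ x, 0 ≤ x → 0 ≤ g₀ x := by
    intro x hx
    exact Real.rpow_nonneg
      (add_nonneg (mul_nonneg hα.le (Real.rpow_nonneg hx p))
        (mul_nonneg hβ.le (Real.rpow_nonneg hx q))) k
  have hg₀pos : ∀ x, 0 < x → 0 < g₀ x := by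
    intro x hx
    exact Real.rpow_pos_of_pos
      (add_pos (mul_pos hα (Real.rpow_pos_of_pos hx p))
        (mul_pos hβ (Real.rpow_pos_of_pos hx q))) k
  have hWd : ∀ t ∈ Set.Icc (0:ℝ) Tc, HasDerivAt W (2 * A t) t := by
    intro t ht
    exact deriv_quadratic M hsymm v t (D t) (fun i => hderiv t ht i)
  have hAle : ∀ t ∈ Set.Icc (0:ℝ) Tc, A t ≤ -(κv * (g₀ (S t) * S t)) := by
    intro t ht
    obtain ⟨i₀, -, hi₀⟩ := Finset.exists_max_image Finset.univ (fun i => |e t i|)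
      ⟨⟨0, Nat.lt_of_lt_of_le Nat.zero_lt_one hN⟩, Finset.mem_univ _⟩
    set m := |e t i₀| with hm
    have hmnn : 0 ≤ m := abs_nonneg _
    have hterm : ∀ i, D t i * e t i ≤ -(κv * (g₀ |e t i| * |e t i|)) := by
      intro i
      have hgx : 0 ≤ g₀ |e t i| := hg₀nn _ (abs_nonneg _)
      have hsgn : Real.sign (e t i) * e t i = |e t i| := by
        rcases lt_trichotomy (e t i) 0 with h|h|h
        · rw [Real.sign_of_neg h, abs_of_neg h]; ring
        · simp [h]
        · rw [Real.sign_of_pos h, abs_of_pos h]; ring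
      have hx : |u₀ t * e t i| ≤ u₀max * |e t i| := by
        rw [abs_mul]
        exact mul_le_mul_of_nonneg_right (hu₀ t) (abs_nonneg _)
      have hκi := hκs i
      have expand : D t i * e t i
          = -(κs i) * (g₀ |e t i| + ζv) * |e t i| - u₀ t * e t i := by
        rw [hD, hg₀]
        simp only
        rw [show (-(κs i) * ((α * |e t i| ^ p + β * |e t i| ^ q) ^ k + ζv) * Real.sign (e t i)
              - u₀ t) * e t i
          = -(κs i) * ((α * |e t i| ^ p + β * |e t i| ^ q) ^ k + ζv) * (Real.sign (e t i) * e t i)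
              - u₀ t * e t i from by ring, hsgn]
      rw [expand]
      have h1 : -(κs i) * (g₀ |e t i| + ζv) * |e t i|
          ≤ -κv * (g₀ |e t i| + ζv) * |e t i| := by
        have : κv * (g₀ |e t i| + ζv) * |e t i| ≤ κs i * (g₀ |e t i| + ζv) * |e t i| :=
          mul_le_mul_of_nonneg_right
            (mul_le_mul_of_nonneg_right hκi (add_nonneg hgx hζv)) (abs_nonneg _)
        linarith
      have h2 : -(u₀ t * e t i) ≤ κv * ζv * |e t i| := by
        calc -(u₀ t * e t i) ≤ |u₀ t * e t i| := neg_le_abs _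
          _ ≤ u₀max * |e t i| := hx
          _ ≤ κv * ζv * |e t i| := mul_le_mul_of_nonneg_right hκζ (abs_nonneg _)
      nlinarith [abs_nonneg (e t i), hgx]
    have hsum : A t ≤ -(κv * (g₀ m * m)) := by
      have hnn : ∀ i ∈ Finset.univ, (0:ℝ) ≤ κv * (g₀ |e t i| * |e t i|) := fun i _ =>
        mul_nonneg hκv0.le (mul_nonneg (hg₀nn _ (abs_nonneg _)) (abs_nonneg _))
      have h1 : A t ≤ ∑ i, -(κv * (g₀ |e t i| * |e t i|)) :=
        Finset.sum_le_sum (fun i _ => hterm i)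
      have h2 : κv * (g₀ m * m) ≤ ∑ i, κv * (g₀ |e t i| * |e t i|) :=
        Finset.single_le_sum hnn (Finset.mem_univ i₀)
      rw [Finset.sum_neg_distrib] at h1
      linarith
    have hWt := hWpos t ht
    have hee : 0 ≤ e t ⬝ᵥ e t := Finset.sum_nonneg fun i _ => mul_self_nonneg _
    have hE : lam * W t ≤ e t ⬝ᵥ e t := by
      have hcs0 := Finset.sum_mul_sq_le_sq_mul_sq Finset.univ (v t) (e t)
      have hvv2 : v t ⬝ᵥ v t = ∑ i, (v t i)^2 := by
        simp [dotProduct, sq]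
      have hee2 : e t ⬝ᵥ e t = ∑ i, (e t i)^2 := by
        simp [dotProduct, sq]
      have hcs : (v t ⬝ᵥ e t)^2 ≤ (v t ⬝ᵥ v t) * (e t ⬝ᵥ e t) := by
        rw [hvv2, hee2]
        exact hcs0
      have hq1 : lam * (v t ⬝ᵥ v t) ≤ W t := hquad (v t)
      have hWeq : W t = v t ⬝ᵥ e t := rfl
      nlinarith [hWt, hee, hcs, hq1]
    have hmS : S t ≤ m := by
      have hEm : e t ⬝ᵥ e t ≤ N * m^2 := by
        have hb : ∀ i ∈ Finset.univ, e t i * e t i ≤ m^2 := by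
          intro i _
          have := hi₀ i (Finset.mem_univ i)
          calc e t i * e t i = |e t i|^2 := by rw [sq_abs]; ring
            _ ≤ m^2 := pow_le_pow_left₀ (abs_nonneg _) this 2
        calc e t ⬝ᵥ e t = ∑ i, e t i * e t i := rfl
          _ ≤ ∑ _i : Fin N, m^2 := Finset.sum_le_sum hb
          _ = N * m^2 := by rw [Finset.sum_const]; simp [mul_comm]
      have hc₀W : c₀ * W t ≤ m^2 := by
        rw [hc₀, div_mul_eq_mul_div, div_le_iff₀ hNpos]
        nlinarith [hE, hEm]
      calc S t = Real.sqrt (c₀ * W t) := rfl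
        _ ≤ Real.sqrt (m^2) := Real.sqrt_le_sqrt hc₀W
        _ = m := by rw [Real.sqrt_sq hmnn]
    have hg₀m : g₀ (S t) * S t ≤ g₀ m * m := by
      have hSt := (hSpos t ht).le
      have hinner : α * (S t)^p + β * (S t)^q ≤ α * m^p + β * m^q := by
        have h1 : (S t)^p ≤ m^p := Real.rpow_le_rpow hSt hmS hp.le
        have h2 : (S t)^q ≤ m^q := Real.rpow_le_rpow hSt hmS hq.le
        nlinarith
      have hmono : g₀ (S t) ≤ g₀ m := by
        rw [hg₀]
        exact Real.rpow_le_rpow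
          (add_nonneg (mul_nonneg hα.le (Real.rpow_nonneg hSt p))
            (mul_nonneg hβ.le (Real.rpow_nonneg hSt q))) hinner hk.le
      exact mul_le_mul hmono hmS hSt (hg₀nn m hmnn)
    have hmul : κv * (g₀ (S t) * S t) ≤ κv * (g₀ m * m) :=
      mul_le_mul_of_nonneg_left hg₀m hκv0.le
    linarith
  set F : ℝ → ℝ := fun t => φ (S t) + c₀ * κv * t with hF
  have hFd : ∀ t ∈ Set.Icc (0:ℝ) Tc,
      HasDerivAt F ((g₀ (S t))⁻¹ * (c₀ * (2 * A t) / (2 * S t)) + c₀ * κv) t := by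
    intro t ht
    have hSt := hSpos t ht
    have hWt := hWpos t ht
    have hSd : HasDerivAt S (c₀ * (2 * A t) / (2 * S t)) t := by
      have h1 : HasDerivAt (fun s => c₀ * W s) (c₀ * (2 * A t)) t := (hWd t ht).const_mul c₀
      exact h1.sqrt (mul_pos hc₀pos hWt).ne'
    have hφd : HasDerivAt φ ((g₀ (S t))⁻¹) (S t) :=
      phi_hasDerivAt hα hβ hk hp hpq hkp hkq hSt
    have hlin : HasDerivAt (fun s : ℝ => c₀ * κv * s) (c₀ * κv) t := by
      simpa using (hasDerivAt_id t).const_mul (c₀ * κv)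
    exact (hφd.comp t hSd).add hlin
  have hF'le : ∀ t ∈ Set.Icc (0:ℝ) Tc,
      (g₀ (S t))⁻¹ * (c₀ * (2 * A t) / (2 * S t)) + c₀ * κv ≤ 0 := by
    intro t ht
    have hSt := hSpos t ht
    have hg₀St : 0 < g₀ (S t) := hg₀pos _ hSt
    have hAt := hAle t ht
    have h1 : c₀ * (2 * A t) / (2 * S t)
        ≤ c₀ * (2 * -(κv * (g₀ (S t) * S t))) / (2 * S t) := by
      have hnum : c₀ * (2 * A t) ≤ c₀ * (2 * -(κv * (g₀ (S t) * S t))) :=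
        mul_le_mul_of_nonneg_left (by linarith) hc₀pos.le
      exact div_le_div_of_nonneg_right hnum (mul_pos two_pos hSt).le
    have h2 : (g₀ (S t))⁻¹ * (c₀ * (2 * A t) / (2 * S t))
        ≤ (g₀ (S t))⁻¹ * (c₀ * (2 * -(κv * (g₀ (S t) * S t))) / (2 * S t)) :=
      mul_le_mul_of_nonneg_left h1 (inv_nonneg.mpr hg₀St.le)
    have h3 : (g₀ (S t))⁻¹ * (c₀ * (2 * -(κv * (g₀ (S t) * S t))) / (2 * S t))
        = -(c₀ * κv) := by
      field_simp
    linarith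
  have hanti : AntitoneOn F (Set.Icc 0 Tc) := by
    apply antitoneOn_of_deriv_nonpos (convex_Icc 0 Tc)
    · intro t ht
      exact (hFd t ht).continuousAt.continuousWithinAt
    · intro t ht
      rw [interior_Icc] at ht
      exact (hFd t (Set.Ioo_subset_Icc_self ht)).differentiableAt.differentiableWithinAt
    · intro t ht
      rw [interior_Icc] at ht
      rw [(hFd t (Set.Ioo_subset_Icc_self ht)).deriv]
      exact hF'le t (Set.Ioo_subset_Icc_self ht)
  have hmem0 : (0:ℝ) ∈ Set.Icc (0:ℝ) Tc := ⟨le_refl _, hTc.le⟩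
  have hmemT : Tc ∈ Set.Icc (0:ℝ) Tc := ⟨hTc.le, le_refl _⟩
  have hFT : F Tc ≤ F 0 := hanti hmem0 hmemT hTc.le
  have hφT : 0 < φ (S Tc) := phi_pos hα hβ hk hp hpq hkp hkq (hSpos Tc hmemT)
  have hφ0 : φ (S 0) ≤ γ := by
    rw [hγ]
    exact phi_le hα hβ hk hp hpq hkp hkq (hSnn 0)
  have hγTc : γ ≤ c₀ * κv * Tc := by
    have hpos : (0:ℝ) < lam * Tc / N := div_pos (mul_pos hlam hTc) hNpos
    have h := mul_le_mul_of_nonneg_left hκv hpos.le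
    have heq : lam * Tc / N * ((N:ℝ) * γ / (lam * Tc)) = γ := by
      field_simp
    rw [heq] at h
    calc γ ≤ lam * Tc / N * κv := h
      _ = c₀ * κv * Tc := by rw [hc₀]; ring
  have hFT' : φ (S Tc) + c₀ * κv * Tc ≤ φ (S 0) + c₀ * κv * 0 := hFT
  linarith
end

section
/- Let N ≥ 1, let M be a real N×N symmetric matrix, and let λ > 0 satisfy λ·‖y‖² ≤ yᵀ M y for every y ∈ ℝ^N. Let α, β, k > 0 and 0 < p < q with k·p < 1 and k·q > 1, and let γ := Γ((1−k·p)/(q−p))·Γ((k·q−1)/(q−p)) / (α^k·Γ(k)·(q−p)) · (α/β)^((1−k·p)/(q−p)). Let T_c > 0, ζ_x ≥ 0 and κ₁, …, κ_N, κ_x reals with κᵢ ≥ κ_x for all i and κ_x ≥ N·γ/(λ·T_c). Suppose x̃ : ℝ → ℝ^N is such that for every t ≥ 0 and every index i, the i-th component of x̃ is differentiable at t with derivative x̃ᵢ'(t) = −κᵢ·((α·|eᵢ(t)|^p + β·|eᵢ(t)|^q)^k + ζ_x)·sign(eᵢ(t)), where e(t) := M ⬝ x̃(t). Then x̃(t)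 = 0 for all t ≥ T_c. (The position observation error of the distributed fixed-time observer, after the velocity error has vanished, converges to the origin before the predefined time T_c = T_{c₂} and stays there; Theorem 3, position part.) -/
set_option maxHeartbeats 1000000

open MeasureTheory Set intervalIntegral Topology

open Matrix Real


lemma realBeta (a b : ℝ) (ha : 0 < a) (hb : 0 < b) :
    IntegrableOn (fun u : ℝ => u ^ (a-1) * (1-u) ^ (b-1)) (Ioo 0 1) ∧
    ∫ u in Ioo (0:ℝ) 1, u ^ (a-1) * (1-u) ^ (b-1)
      = Real.Gamma a * Real.Gamma b / Real.Gamma (a+b) := by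
  have hre : ∀ x ∈ uIcc (0:ℝ) 1,
      ((fun u : ℝ => ((u ^ (a-1) * (1-u) ^ (b-1) : ℝ) : ℂ)) x)
        = (x:ℂ) ^ ((a:ℂ)-1) * (1-(x:ℂ)) ^ ((b:ℂ)-1) := by
    intro x hx
    rw [uIcc_of_le zero_le_one] at hx
    have h1 : (0:ℝ) ≤ 1 - x := by linarith [hx.2]
    push_cast
    rw [Complex.ofReal_cpow hx.1 (a-1), Complex.ofReal_cpow h1 (b-1)]
    push_cast
    ring
  have hconv := Complex.betaIntegral_convergent (u := (a:ℂ)) (v := (b:ℂ)) (by simpa using ha) (by simpa using hb)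
  have h2 : IntervalIntegrable (fun u : ℝ => ((u ^ (a-1) * (1-u) ^ (b-1) : ℝ) : ℂ)) volume 0 1 := by
    apply hconv.congr
    have := uIoc_subset_uIcc (α := ℝ) (a := 0) (b := 1)
    intro x hx
    exact (hre x (this hx)).symm
  have hint : IntervalIntegrable (fun u : ℝ => u ^ (a-1) * (1-u) ^ (b-1)) volume 0 1 := by
    constructor
    · exact h2.1.re.congr (ae_of_all _ fun x => by simp)
    · exact h2.2.re.congr (ae_of_all _ fun x => by simp)
  have hβ : Complex.betaIntegral (a:ℂ) (b:ℂ)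
      = ((∫ u in (0:ℝ)..1, u ^ (a-1) * (1-u) ^ (b-1) : ℝ) : ℂ) := by
    rw [Complex.betaIntegral, ← intervalIntegral.integral_ofReal]
    exact (intervalIntegral.integral_congr hre).symm
  have hGk : Complex.Gamma ((a:ℂ) + (b:ℂ)) ≠ 0 := by
    rw [show ((a:ℂ) + (b:ℂ)) = ((a+b : ℝ) : ℂ) by push_cast; ring, Complex.Gamma_ofReal]
    exact_mod_cast (Real.Gamma_pos_of_pos (by linarith)).ne'
  have hmul := Complex.Gamma_mul_Gamma_eq_betaIntegral (s := (a:ℂ)) (t := (b:ℂ))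
      (by simpa using ha) (by simpa using hb)
  have hGne : Real.Gamma (a+b) ≠ 0 := (Real.Gamma_pos_of_pos (by linarith)).ne'
  have hval : (∫ u in (0:ℝ)..1, u ^ (a-1) * (1-u) ^ (b-1) : ℝ)
      = Real.Gamma a * Real.Gamma b / Real.Gamma (a+b) := by
    have h3 := hmul
    rw [hβ, show ((a:ℂ)+(b:ℂ)) = ((a+b:ℝ):ℂ) by push_cast; ring] at h3
    rw [Complex.Gamma_ofReal, Complex.Gamma_ofReal, Complex.Gamma_ofReal] at h3
    have h4 : Real.Gamma a * Real.Gamma b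
        = Real.Gamma (a+b) * ∫ u in (0:ℝ)..1, u ^ (a-1) * (1-u) ^ (b-1) := by
      exact_mod_cast h3
    rw [eq_div_iff hGne]
    linarith [h4]
  constructor
  · exact (hint.1.mono_set Ioo_subset_Ioc_self)
  · rw [← MeasureTheory.integral_Ioc_eq_integral_Ioo, ← intervalIntegral.integral_of_le zero_le_one]
    exact hval


lemma step2 (a b : ℝ) (ha : 0 < a) (hb : 0 < b) :
    IntegrableOn (fun t : ℝ => t ^ (a-1) * (1+t) ^ (-(a+b))) (Ioi 0) ∧
    ∫ t in Ioi (0:ℝ), t ^ (a-1) * (1+t) ^ (-(a+b))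
      = Real.Gamma a * Real.Gamma b / Real.Gamma (a+b) := by
  set g : ℝ → ℝ := fun t => t ^ (a-1) * (1+t) ^ (-(a+b)) with hg
  set f : ℝ → ℝ := fun u => u / (1-u) with hf
  set f' : ℝ → ℝ := fun u => ((1-u)^(2:ℕ))⁻¹ with hf'
  have hd : ∀ u ∈ Ioo (0:ℝ) 1, HasDerivWithinAt f (f' u) (Ioo 0 1) u := by
    intro u hu
    have h1 : (1:ℝ) - u ≠ 0 := by simp only [mem_Ioo] at hu; intro h; linarith [hu.2]
    have := (hasDerivAt_id u).div ((hasDerivAt_id u).const_sub 1) h1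
    apply HasDerivAt.hasDerivWithinAt
    convert this using 1
    · rfl
    · rfl
    simp only [hf', id_eq]
    rw [eq_div_iff (by positivity)]
    field_simp
    ring
  have hinj : InjOn f (Ioo 0 1) := by
    intro u hu v hv h
    simp only [mem_Ioo] at hu hv
    have h1 : (1:ℝ) - u ≠ 0 := by intro h; linarith [hu.2]
    have h2 : (1:ℝ) - v ≠ 0 := by intro h; linarith [hv.2]
    have : u * (1-v) = v * (1-u) := by
      simp only [hf] at h; field_simp at h; linarith [h]
    nlinarith [this]
  have himg : f '' (Ioo 0 1) = Ioi 0 := by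
    ext t
    constructor
    · rintro ⟨u, hu, rfl⟩
      simp only [mem_Ioo] at hu
      exact div_pos hu.1 (by linarith [hu.2])
    · intro ht
      have ht' : (0:ℝ) < t := ht
      refine ⟨t / (1+t), ?_, ?_⟩
      · constructor
        · exact div_pos ht' (by linarith)
        · rw [div_lt_one (by linarith)]; linarith
      · simp only [hf]
        rw [show (1 : ℝ) - t/(1+t) = 1/(1+t) by field_simp; ring]
        field_simp
  have hpt : ∀ u ∈ Ioo (0:ℝ) 1, |f' u| • g (f u) = u ^ (a-1) * (1-u) ^ (b-1) := by
    intro u hu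
    simp only [mem_Ioo] at hu
    have hw : (0:ℝ) < 1 - u := by linarith [hu.2]
    simp only [hf, hf', hg, smul_eq_mul]
    have A1 : |(((1-u)^(2:ℕ))⁻¹ : ℝ)| = (1-u) ^ (-2:ℝ) := by
      rw [abs_of_pos (by positivity), ← Real.rpow_natCast (1-u) 2, ← Real.rpow_neg hw.le]
      norm_num
    have A2 : (u/(1-u)) ^ (a-1) = u ^ (a-1) * (1-u) ^ (-(a-1)) := by
      rw [Real.div_rpow hu.1.le hw.le, Real.rpow_neg hw.le, div_eq_mul_inv]
    have A3 : (1:ℝ) + u/(1-u) = (1-u)⁻¹ := by field_simp; ring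
    have A4 : ((1-u)⁻¹) ^ (-(a+b)) = (1-u) ^ (a+b) := by
      rw [Real.inv_rpow hw.le, ← Real.rpow_neg hw.le, neg_neg]
    rw [A1, A2, A3, A4]
    have e1 : (1-u) ^ (-2:ℝ) * (u^(a-1) * (1-u)^(-(a-1)) * (1-u)^(a+b))
        = u^(a-1) * ((1-u)^(-2:ℝ) * (1-u)^(-(a-1)) * (1-u)^(a+b)) := by ring
    rw [e1, ← Real.rpow_add hw, ← Real.rpow_add hw]
    congr 1
    ring
  have hI := MeasureTheory.integral_image_eq_integral_abs_deriv_smul measurableSet_Ioo hd hinj g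
  have hII := MeasureTheory.integrableOn_image_iff_integrableOn_abs_deriv_smul measurableSet_Ioo hd hinj g
  rw [himg] at hI hII
  obtain ⟨ib, vb⟩ := realBeta a b ha hb
  constructor
  · rw [hII]
    exact ib.congr_fun (fun u hu => (hpt u hu).symm) measurableSet_Ioo
  · rw [hI, ← vb]
    exact MeasureTheory.setIntegral_congr_fun measurableSet_Ioo hpt


lemma Wintegral (α β k p q : ℝ) (hα : 0 < α) (hβ : 0 < β) (hk : 0 < k)
    (hp : 0 < p) (hpq : p < q) (hkp : k*p < 1) (hkq : 1 < k*q) :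
    IntegrableOn (fun s : ℝ => ((α * s^p + β * s^q)^k)⁻¹) (Ioi 0) ∧
    ∫ s in Ioi (0:ℝ), ((α * s^p + β * s^q)^k)⁻¹
      = Real.Gamma ((1-k*p)/(q-p)) * Real.Gamma ((k*q-1)/(q-p)) /
          (α^k * Real.Gamma k * (q-p)) * (α/β)^((1-k*p)/(q-p)) := by
  have hr : (0:ℝ) < q - p := by linarith
  set r := q - p with hrdef
  set a := (1-k*p)/r with hadef
  set b := (k*q-1)/r with hbdef
  have ha : 0 < a := div_pos (by linarith) hr
  have hb : 0 < b := div_pos (by linarith) hr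
  have hab : a + b = k := by rw [hadef, hbdef]; field_simp; ring
  obtain ⟨i2, v2⟩ := step2 a b ha hb
  rw [hab] at i2 v2
  set g : ℝ → ℝ := fun t => t ^ (a-1) * (1+t) ^ (-k) with hgdef
  set h : ℝ → ℝ := fun u => u ^ (-(k*p)) * (1+u^r) ^ (-k) with hhdef
  -- pointwise for step 3
  have hpt3 : ∀ x : ℝ, x ∈ Ioi (0:ℝ) → (r * x^(r-1)) • g (x^r) = r * h x := by
    intro x hx
    have hx' : (0:ℝ) < x := hx
    simp only [hgdef, hhdef, smul_eq_mul]
    rw [← Real.rpow_mul hx'.le r (a-1)]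
    have e : x ^ (r-1) * x ^ (r*(a-1)) = x ^ (-(k*p)) := by
      rw [← Real.rpow_add hx']
      congr 1
      have : r * a = 1 - k*p := by rw [hadef]; field_simp
      nlinarith [this]
    calc r * x^(r-1) * (x^(r*(a-1)) * (1+x^r)^(-k))
        = r * ((x^(r-1) * x^(r*(a-1))) * (1+x^r)^(-k)) := by ring
      _ = r * (x^(-(k*p)) * (1+x^r)^(-k)) := by rw [e]
  have h3v : ∫ u in Ioi (0:ℝ), h u = Real.Gamma a * Real.Gamma b / Real.Gamma k / r := by
    have := MeasureTheory.integral_comp_rpow_Ioi_of_pos (g := g) hr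
    rw [MeasureTheory.setIntegral_congr_fun measurableSet_Ioi hpt3] at this
    rw [MeasureTheory.integral_const_mul] at this
    rw [v2] at this
    field_simp at this ⊢
    linarith [this]
  have h3i : IntegrableOn h (Ioi 0) := by
    have := (MeasureTheory.integrableOn_Ioi_comp_rpow_iff g hr.ne').mpr i2
    have h2 : IntegrableOn (fun x => r * h x) (Ioi 0) := by
      apply MeasureTheory.IntegrableOn.congr_fun this _ measurableSet_Ioi
      intro x hx
      simpa [abs_of_pos hr] using hpt3 x hx
    have h4 := h2.const_mul r⁻¹
    apply MeasureTheory.IntegrableOn.congr_fun h4 _ measurableSet_Ioi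
    intro x hx
    field_simp
  -- step 4
  set c := (α/β) ^ r⁻¹ with hcdef
  have hc : 0 < c := Real.rpow_pos_of_pos (div_pos hα hβ) _
  have hcr : c ^ r = α / β := by
    rw [hcdef, ← Real.rpow_mul (div_pos hα hβ).le, inv_mul_cancel₀ hr.ne', Real.rpow_one]
  set W : ℝ → ℝ := fun s => ((α * s^p + β * s^q)^k)⁻¹ with hWdef
  have hpt4 : ∀ x : ℝ, x ∈ Ioi (0:ℝ) → W (c*x) = (α^k)⁻¹ * (c^(k*p))⁻¹ * h x := by
    intro x hx
    have hx' : (0:ℝ) < x := hx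
    have hsum : α * (c*x)^p + β * (c*x)^q = α * c^p * (x^p * (1+x^r)) := by
      rw [Real.mul_rpow hc.le hx'.le, Real.mul_rpow hc.le hx'.le,
        show q = p + r by ring, Real.rpow_add hc, Real.rpow_add hx', hcr]
      field_simp
    simp only [hWdef, hhdef]
    rw [hsum]
    have h1xr : (0:ℝ) < 1 + x^r := by positivity
    rw [Real.mul_rpow (by positivity) (by positivity),
        Real.mul_rpow hα.le (Real.rpow_nonneg hc.le p),
        Real.mul_rpow (Real.rpow_nonneg hx'.le p) h1xr.le,
        ← Real.rpow_mul hc.le, ← Real.rpow_mul hx'.le]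
    rw [Real.rpow_neg hx'.le, Real.rpow_neg h1xr.le]
    rw [mul_comm p k]
    simp [mul_inv]
    ring
  have hscale := MeasureTheory.integral_comp_mul_left_Ioi W 0 hc
  rw [mul_zero] at hscale
  have hWc : ∫ x in Ioi (0:ℝ), W (c*x) = (α^k)⁻¹ * (c^(k*p))⁻¹ * ∫ u in Ioi (0:ℝ), h u := by
    rw [MeasureTheory.setIntegral_congr_fun measurableSet_Ioi hpt4]
    rw [show (fun x => (α^k)⁻¹ * (c^(k*p))⁻¹ * h x) = fun x => ((α^k)⁻¹ * (c^(k*p))⁻¹) * h x by ring_nf]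
    exact MeasureTheory.integral_const_mul _ _
  have hcpow : c * (c^(k*p))⁻¹ = (α/β) ^ a := by
    have h1 : c ^ (1 + -(k*p)) = c^(1:ℝ) * c^(-(k*p)) := Real.rpow_add hc 1 (-(k*p))
    rw [Real.rpow_one] at h1
    rw [← Real.rpow_neg hc.le, ← h1, hcdef, ← Real.rpow_mul (div_pos hα hβ).le]
    congr 1
    rw [hadef]
    field_simp
    ring
  constructor
  · rw [show Ioi (0:ℝ) = Ioi (c * 0) by rw [mul_zero]]
    rw [← MeasureTheory.integrableOn_Ioi_comp_mul_left_iff W 0 hc]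
    apply MeasureTheory.IntegrableOn.congr_fun (h3i.const_mul ((α^k)⁻¹ * (c^(k*p))⁻¹)) _ measurableSet_Ioi
    intro x hx
    exact (hpt4 x hx).symm
  · have : ∫ s in Ioi (0:ℝ), W s = c * ∫ x in Ioi (0:ℝ), W (c*x) := by
      rw [hscale]; simp [smul_eq_mul]; field_simp
    rw [this, hWc, h3v]
    rw [show c * ((α^k)⁻¹ * (c^(k*p))⁻¹ * (Real.Gamma a * Real.Gamma b / Real.Gamma k / r))
        = (c * (c^(k*p))⁻¹) * ((α^k)⁻¹ * (Real.Gamma a * Real.Gamma b / Real.Gamma k / r)) by ring,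
      hcpow]
    field_simp


lemma self_mul_sign' (x : ℝ) : x * Real.sign x = |x| := by
  rcases lt_trichotomy x 0 with h|h|h
  · rw [Real.sign_of_neg h, abs_of_neg h]; ring
  · simp [h]
  · rw [Real.sign_of_pos h, abs_of_pos h]; ring

/-- Theorem 3, position part: after the velocity observation error has
vanished, the position observation error of the distributed fixed-time
observer converges to the origin before the predefined time `T_c` and stays
there. -/
theorem observer_position_fixed_time
    (N : ℕ) (hN : 1 ≤ N) (M : Matrix (Fin N) (Fin N) ℝ) (hsymm : M.IsSymm)
    (lam : ℝ) (hlam : 0 < lam)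
    (hquad : ∀ y : Fin N → ℝ, lam * (y ⬝ᵥ y) ≤ y ⬝ᵥ M.mulVec y)
    (α β k p q : ℝ) (hα : 0 < α) (hβ : 0 < β) (hk : 0 < k)
    (hp : 0 < p) (hpq : p < q) (hkp : k * p < 1) (hkq : 1 < k * q)
    (γ : ℝ)
    (hγ : γ = Real.Gamma ((1 - k * p) / (q - p)) * Real.Gamma ((k * q - 1) / (q - p)) /
        (α ^ k * Real.Gamma k * (q - p)) * (α / β) ^ ((1 - k * p) / (q - p)))
    (Tc : ℝ) (hTc : 0 < Tc)
    (ζx : ℝ) (hζx : 0 ≤ ζx)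
    (κs : Fin N → ℝ) (κx : ℝ) (hκs : ∀ i, κx ≤ κs i)
    (hκx : (N : ℝ) * γ / (lam * Tc) ≤ κx)
    (x : ℝ → Fin N → ℝ)
    (hderiv : ∀ t : ℝ, 0 ≤ t → ∀ i : Fin N,
      HasDerivAt (fun s => x s i)
        (-(κs i) * ((α * |M.mulVec (x t) i| ^ p + β * |M.mulVec (x t) i| ^ q) ^ k + ζx) *
            Real.sign (M.mulVec (x t) i)) t) :
    ∀ t : ℝ, Tc ≤ t → x t = 0 := by
  have hN0 : (0:ℝ) < N := by exact_mod_cast Nat.lt_of_lt_of_le Nat.zero_lt_one hN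
  -- γ > 0 and κx > 0
  have hr : (0:ℝ) < q - p := by linarith
  have hγpos : 0 < γ := by
    rw [hγ]
    have g1 := Real.Gamma_pos_of_pos (div_pos (by linarith : (0:ℝ) < 1 - k*p) hr)
    have g2 := Real.Gamma_pos_of_pos (div_pos (by linarith : (0:ℝ) < k*q - 1) hr)
    have g3 := Real.Gamma_pos_of_pos hk
    have g4 : (0:ℝ) < α ^ k := Real.rpow_pos_of_pos hα _
    have g5 : (0:ℝ) < (α/β) ^ ((1-k*p)/(q-p)) := Real.rpow_pos_of_pos (div_pos hα hβ) _
    positivity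
  have hκx0 : 0 < κx :=
    lt_of_lt_of_le (by positivity) hκx
  set c : ℝ := lam / N with hcdef
  have hc : 0 < c := div_pos hlam hN0
  -- the W function and its facts
  set W : ℝ → ℝ := fun s => ((α * s^p + β * s^q)^k)⁻¹ with hWdef
  obtain ⟨Wint, Wval⟩ := Wintegral α β k p q hα hβ hk hp hpq hkp hkq
  have Wpos : ∀ s : ℝ, 0 < s → 0 < W s := by
    intro s hs
    have h1 : (0:ℝ) < α * s^p + β * s^q := by
      have := Real.rpow_pos_of_pos hs p
      have := Real.rpow_pos_of_pos hs q
      positivity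
    simp only [hWdef]
    exact inv_pos.mpr (Real.rpow_pos_of_pos h1 k)
  set W₀ : ℝ → ℝ := (Ioi (0:ℝ)).indicator W with hW0def
  have W0nonneg : ∀ s, 0 ≤ W₀ s := by
    intro s
    apply Set.indicator_nonneg
    intro y hy
    exact (Wpos y hy).le
  have W0int : Integrable W₀ := Wint.integrable_indicator measurableSet_Ioi
  set P : ℝ → ℝ := fun y => ∫ s in (0:ℝ)..y, W₀ s with hPdef
  have Pcont : Continuous P :=
    intervalIntegral.continuous_primitive (fun a b => W0int.intervalIntegrable) 0
  have Pnonneg : ∀ y, 0 ≤ y → 0 ≤ P y := fun y hy =>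
    intervalIntegral.integral_nonneg hy (fun s _ => W0nonneg s)
  have Pleγ : ∀ y, 0 ≤ y → P y ≤ γ := by
    intro y hy
    have h1 : P y = ∫ s in Ioc (0:ℝ) y, W₀ s := intervalIntegral.integral_of_le hy
    have h2 : ∫ s in Ioc (0:ℝ) y, W₀ s = ∫ s in Ioc (0:ℝ) y, W s := by
      apply MeasureTheory.setIntegral_congr_fun measurableSet_Ioc
      intro s hs
      exact Set.indicator_of_mem (hs.1 : s ∈ Ioi 0) W
    show P y ≤ γ
    rw [h1, h2, hγ, ← Wval]
    apply MeasureTheory.setIntegral_mono_set Wint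
    · filter_upwards [ae_restrict_mem measurableSet_Ioi] with s hs using (Wpos s hs).le
    · exact HasSubset.Subset.eventuallyLE Ioc_subset_Ioi_self
  -- the Lyapunov function
  set V : ℝ → ℝ := fun t => (x t) ⬝ᵥ M.mulVec (x t) with hVdef
  have Vnonneg : ∀ t, 0 ≤ V t := by
    intro t
    have h1 : (0:ℝ) ≤ (x t) ⬝ᵥ (x t) :=
      Finset.sum_nonneg (fun i _ => mul_self_nonneg _)
    exact le_trans (by positivity) (hquad (x t))
  -- derivative of V
  set E : ℝ → Fin N → ℝ := fun t => M.mulVec (x t) with hEdef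
  set D : ℝ → Fin N → ℝ := fun t i =>
    -(κs i) * ((α * |E t i| ^ p + β * |E t i| ^ q) ^ k + ζx) * Real.sign (E t i) with hDdef
  set S : ℝ → ℝ := fun t =>
    -2 * ∑ i, κs i * ((α * |E t i| ^ p + β * |E t i| ^ q) ^ k + ζx) * |E t i| with hSdef
  have hVd : ∀ t : ℝ, 0 ≤ t → HasDerivAt V (S t) t := by
    intro t ht
    have hVform : V = fun u => ∑ i, ∑ j, M i j * (x u i * x u j) := by
      funext u
      simp only [hVdef, dotProduct, Matrix.mulVec, Finset.mul_sum]
      apply Finset.sum_congr rfl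
      intro i _
      apply Finset.sum_congr rfl
      intro j _
      ring
    have hd : HasDerivAt (fun u => ∑ i, ∑ j, M i j * (x u i * x u j))
        (∑ i, ∑ j, M i j * (D t i * x t j + x t i * D t j)) t := by
      apply HasDerivAt.fun_sum
      intro i _
      apply HasDerivAt.fun_sum
      intro j _
      exact ((hderiv t ht i).mul (hderiv t ht j)).const_mul (M i j)
    rw [← hVform] at hd
    have hMs : ∀ i j, M i j = M j i := by
      intro i j
      have h := congrFun (congrFun hsymm i) j
      rw [Matrix.transpose_apply] at h
      exact h.symm
    have hsum : (∑ i, ∑ j, M i j * (D t i * x t j + x t i * D t j)) = S t := by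
      have e1 : ∀ i : Fin N, ∀ j : Fin N, M i j * (D t i * x t j + x t i * D t j)
          = D t i * (M i j * x t j) + (M i j * x t i) * D t j := fun i j => by ring
      have h1 : (∑ i, ∑ j, M i j * (D t i * x t j + x t i * D t j))
          = (∑ i, D t i * ∑ j, M i j * x t j) + (∑ j, (∑ i, M i j * x t i) * D t j) := by
        simp_rw [e1, Finset.sum_add_distrib, ← Finset.mul_sum]
        congr 1
        rw [Finset.sum_comm]
        simp_rw [Finset.sum_mul]
      have h2a : ∀ i, ∑ j, M i j * x t j = E t i := by
        intro i; simp [hEdef, Matrix.mulVec, dotProduct]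
      have h2b : ∀ j, ∑ i, M i j * x t i = E t j := by
        intro j
        rw [← h2a j]
        exact Finset.sum_congr rfl (fun i _ => by rw [hMs i j])
      have h3 : ∀ i, D t i * E t i
          = -(κs i * ((α * |E t i| ^ p + β * |E t i| ^ q) ^ k + ζx) * |E t i|) := by
        intro i
        have hs := self_mul_sign' (E t i)
        calc D t i * E t i
            = -(κs i * ((α * |E t i| ^ p + β * |E t i| ^ q) ^ k + ζx)
                * (E t i * Real.sign (E t i))) := by simp only [hDdef]; ring
          _ = _ := by rw [hs]
      rw [h1]
      simp_rw [h2a, h2b]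
      have hcm : ∀ j, E t j * D t j = D t j * E t j := fun j => mul_comm _ _
      simp_rw [hcm, h3, hSdef, Finset.mul_sum, ← Finset.sum_add_distrib]
      exact Finset.sum_congr rfl (fun i _ => by ring)
    rw [hsum] at hd
    exact hd
  -- each summand in S is nonneg
  have hterm_nonneg : ∀ t : ℝ, ∀ i : Fin N,
      0 ≤ κs i * ((α * |E t i| ^ p + β * |E t i| ^ q) ^ k + ζx) * |E t i| := by
    intro t i
    have h1 : 0 ≤ κs i := le_trans hκx0.le (hκs i)
    have h2 : (0:ℝ) ≤ (α * |E t i| ^ p + β * |E t i| ^ q) ^ k :=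
      Real.rpow_nonneg (by positivity) k
    exact mul_nonneg (mul_nonneg h1 (add_nonneg h2 hζx)) (abs_nonneg _)
  have hSnonpos : ∀ t : ℝ, S t ≤ 0 := by
    intro t
    simp only [hSdef]
    have := Finset.sum_nonneg (fun i (_ : i ∈ Finset.univ) => hterm_nonneg t i)
    nlinarith [this]
  -- G monotone
  have hGmono : ∀ s₁ s₂ : ℝ, 0 ≤ s₁ → s₁ ≤ s₂ →
      (α * s₁^p + β * s₁^q)^k * s₁ ≤ (α * s₂^p + β * s₂^q)^k * s₂ := by
    intro s₁ s₂ h0 h12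
    have hb1 : (0:ℝ) ≤ α * s₁^p + β * s₁^q := by positivity
    have hle : α * s₁^p + β * s₁^q ≤ α * s₂^p + β * s₂^q := by
      have e1 := Real.rpow_le_rpow h0 h12 hp.le
      have e2 := Real.rpow_le_rpow h0 h12 (by linarith : (0:ℝ) ≤ q)
      nlinarith [e1, e2]
    exact mul_le_mul (Real.rpow_le_rpow hb1 hle hk.le) h12 h0
      (Real.rpow_nonneg (le_trans hb1 hle) k)
  -- lam * V t ≤ E ⬝ E
  have hEV : ∀ t : ℝ, lam * V t ≤ (E t) ⬝ᵥ (E t) := by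
    intro t
    have hcs : (x t ⬝ᵥ E t)^2 ≤ (x t ⬝ᵥ x t) * (E t ⬝ᵥ E t) := by
      simpa [dotProduct, pow_two] using
        Finset.sum_mul_sq_le_sq_mul_sq Finset.univ (x t) (E t)
    have hq := hquad (x t)
    have hVE : V t = x t ⬝ᵥ E t := rfl
    have hEE : (0:ℝ) ≤ E t ⬝ᵥ E t := Finset.sum_nonneg (fun i _ => mul_self_nonneg _)
    rcases eq_or_lt_of_le (Vnonneg t) with hV0 | hV0
    · rw [← hV0]; simpa using hEE
    · have hxx : (0:ℝ) ≤ x t ⬝ᵥ x t := Finset.sum_nonneg (fun i _ => mul_self_nonneg _)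
      nlinarith [hcs, hq, hV0]
  -- key differential inequality
  have hS : ∀ t : ℝ, S t ≤ -(2*κx) *
      ((α * (Real.sqrt (c * V t))^p + β * (Real.sqrt (c * V t))^q)^k * Real.sqrt (c * V t)) := by
    intro t
    -- max component
    obtain ⟨i₀, -, hi₀⟩ := Finset.exists_max_image Finset.univ (fun i => |E t i|)
      ⟨⟨0, by omega⟩, Finset.mem_univ _⟩
    have hmax : ∀ j, |E t j| ≤ |E t i₀| := fun j => hi₀ j (Finset.mem_univ j)
    have hEE : (E t) ⬝ᵥ (E t) ≤ (N : ℝ) * |E t i₀|^2 := by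
      have : ∀ j : Fin N, E t j * E t j ≤ |E t i₀|^2 := by
        intro j
        have := hmax j
        nlinarith [abs_nonneg (E t j), neg_abs_le (E t j), le_abs_self (E t j)]
      calc (E t) ⬝ᵥ (E t) = ∑ j, E t j * E t j := rfl
        _ ≤ ∑ _j : Fin N, |E t i₀|^2 := Finset.sum_le_sum (fun j _ => this j)
        _ = (N : ℝ) * |E t i₀|^2 := by simp [mul_comm]
    have hm : Real.sqrt (c * V t) ≤ |E t i₀| := by
      rw [show |E t i₀| = Real.sqrt (|E t i₀|^2) by rw [Real.sqrt_sq (abs_nonneg _)]]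
      apply Real.sqrt_le_sqrt
      rw [hcdef]
      rw [div_mul_eq_mul_div, div_le_iff₀ hN0]
      calc lam * V t ≤ (E t) ⬝ᵥ (E t) := hEV t
        _ ≤ (N : ℝ) * |E t i₀|^2 := hEE
        _ = |E t i₀|^2 * N := by ring
    -- the sum is at least the i₀ term
    have hsum_ge : κx * ((α * |E t i₀|^p + β * |E t i₀|^q)^k * |E t i₀|)
        ≤ ∑ i, κs i * ((α * |E t i| ^ p + β * |E t i| ^ q) ^ k + ζx) * |E t i| := by
      have hsingle := Finset.single_le_sum (f := fun i =>
          κs i * ((α * |E t i| ^ p + β * |E t i| ^ q) ^ k + ζx) * |E t i|)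
        (fun i _ => hterm_nonneg t i) (Finset.mem_univ i₀)
      refine le_trans ?_ hsingle
      have hF : (0:ℝ) ≤ (α * |E t i₀|^p + β * |E t i₀|^q)^k :=
        Real.rpow_nonneg (by positivity) k
      have hκi : κx ≤ κs i₀ := hκs i₀
      have hκi0 : (0:ℝ) ≤ κs i₀ := le_trans hκx0.le hκi
      calc κx * ((α * |E t i₀|^p + β * |E t i₀|^q)^k * |E t i₀|)
          = (κx * (α * |E t i₀|^p + β * |E t i₀|^q)^k) * |E t i₀| := by ring
        _ ≤ (κs i₀ * ((α * |E t i₀|^p + β * |E t i₀|^q)^k + ζx)) * |E t i₀| := by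
            apply mul_le_mul_of_nonneg_right _ (abs_nonneg _)
            exact mul_le_mul hκi (by linarith) hF hκi0
    have hG := hGmono (Real.sqrt (c * V t)) (|E t i₀|) (Real.sqrt_nonneg _) hm
    have hfin : κx * ((α * (Real.sqrt (c * V t))^p + β * (Real.sqrt (c * V t))^q)^k
          * Real.sqrt (c * V t))
        ≤ ∑ i, κs i * ((α * |E t i| ^ p + β * |E t i| ^ q) ^ k + ζx) * |E t i| :=
      le_trans (mul_le_mul_of_nonneg_left hG hκx0.le) hsum_ge
    simp only [hSdef]
    nlinarith [hfin]
  -- V is antitone on [0, ∞)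
  have hVcont : ContinuousOn V (Ici 0) :=
    fun t ht => ((hVd t ht).continuousAt).continuousWithinAt
  have hVanti : AntitoneOn V (Ici 0) := by
    apply antitoneOn_of_deriv_nonpos (convex_Ici 0) hVcont
    · intro t ht
      rw [interior_Ici] at ht
      exact ((hVd t (le_of_lt ht)).differentiableAt).differentiableWithinAt
    · intro t ht
      rw [interior_Ici] at ht
      rw [(hVd t (le_of_lt ht)).deriv]
      exact hSnonpos t
  -- there is a zero of V in [0, Tc]
  have hexists : ∃ t₀ ∈ Icc (0:ℝ) Tc, V t₀ = 0 := by
    by_contra hcon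
    push_neg at hcon
    have hVpos : ∀ t ∈ Icc (0:ℝ) Tc, 0 < V t :=
      fun t ht => lt_of_le_of_ne (Vnonneg t) (Ne.symm (hcon t ht))
    set Θ : ℝ → ℝ := fun t => P (Real.sqrt (c * V t)) + (c * κx) * t with hΘdef
    have hΘanti : AntitoneOn Θ (Icc 0 Tc) := by
      apply antitoneOn_of_deriv_nonpos (convex_Icc 0 Tc)
      · apply ContinuousOn.add
        · exact Pcont.comp_continuousOn (Real.continuous_sqrt.comp_continuousOn
            (continuousOn_const.mul (hVcont.mono (Icc_subset_Ici_self))))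
        · exact (continuous_const.mul continuous_id).continuousOn
      all_goals {
        intro t ht
        rw [interior_Icc] at ht
        have ht0 : (0:ℝ) < t := ht.1
        have hVt : 0 < V t := hVpos t ⟨ht0.le, ht.2.le⟩
        have hcV : 0 < c * V t := mul_pos hc hVt
        have hs : 0 < Real.sqrt (c * V t) := Real.sqrt_pos.mpr hcV
        set s := Real.sqrt (c * V t) with hsdef
        have hA : (0:ℝ) < α * s^p + β * s^q := by
          have := Real.rpow_pos_of_pos hs p
          have := Real.rpow_pos_of_pos hs q
          positivity
        have hAk : (0:ℝ) < (α * s^p + β * s^q)^k := Real.rpow_pos_of_pos hA k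
        -- derivative of P at s
        have hWcont : ContinuousAt W₀ s := by
          have hWc : ContinuousAt W s := by
            apply ContinuousAt.inv₀
            · apply ContinuousAt.rpow_const
              apply ContinuousAt.add
              · exact (continuousAt_const.mul ((Real.continuousAt_rpow_const _ _
                  (Or.inl hs.ne')))) 
              · exact (continuousAt_const.mul ((Real.continuousAt_rpow_const _ _
                  (Or.inl hs.ne'))))
              · exact Or.inr hk.le
            · exact hAk.ne'
          apply hWc.congr
          filter_upwards [isOpen_Ioi.mem_nhds (mem_Ioi.mpr hs)] with y hy
          exact (Set.indicator_of_mem hy W).symm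
        have hWmeas : StronglyMeasurableAtFilter W₀ (𝓝 s) volume := by
          refine ⟨Ioi 0, isOpen_Ioi.mem_nhds (mem_Ioi.mpr hs), ?_⟩
          have : ContinuousOn W₀ (Ioi 0) := by
            apply ContinuousOn.congr _ (fun y (hy : y ∈ Ioi 0) => Set.indicator_of_mem hy W)
            intro y hy
            have hy' : (0:ℝ) < y := hy
            have hAy : (0:ℝ) < α * y^p + β * y^q := by
              have := Real.rpow_pos_of_pos hy' p
              have := Real.rpow_pos_of_pos hy' q
              positivity
            apply ContinuousWithinAt.inv₀
            · apply ContinuousWithinAt.rpow_const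
              apply ContinuousWithinAt.add
              · exact (continuousWithinAt_const.mul ((Real.continuousAt_rpow_const _ _
                  (Or.inl hy'.ne')).continuousWithinAt))
              · exact (continuousWithinAt_const.mul ((Real.continuousAt_rpow_const _ _
                  (Or.inl hy'.ne')).continuousWithinAt))
              · exact Or.inr hk.le
            · exact (Real.rpow_pos_of_pos hAy k).ne'
          exact this.aestronglyMeasurable measurableSet_Ioi
        have hP : HasDerivAt P (W₀ s) s :=
          intervalIntegral.integral_hasDerivAt_right (W0int.intervalIntegrable)
            hWmeas hWcont
        have hsq : HasDerivAt (fun u => Real.sqrt (c * V u)) (1/(2*s) * (c * S t)) t := by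
          have h1 : HasDerivAt (fun u => c * V u) (c * S t) t := (hVd t ht0.le).const_mul c
          have h2 : HasDerivAt Real.sqrt (1/(2 * Real.sqrt (c * V t))) (c * V t) :=
            Real.hasDerivAt_sqrt hcV.ne'
          have := h2.comp t h1
          exact this
        have hPV : HasDerivAt (fun u => P (Real.sqrt (c * V u)))
            (W₀ s * (1/(2*s) * (c * S t))) t := by
          have := hP.comp t hsq
          exact this
        have hlin : HasDerivAt (fun u : ℝ => (c * κx) * u) (c * κx) t := by
          simpa using (hasDerivAt_id t).const_mul (c * κx)
        have hΘd : HasDerivAt Θ (W₀ s * (1/(2*s) * (c * S t)) + c * κx) t := hPV.add hlin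
        have hderivle : W₀ s * (1/(2*s) * (c * S t)) + c * κx ≤ 0 := by
          have hW0s : W₀ s = ((α * s^p + β * s^q)^k)⁻¹ :=
            Set.indicator_of_mem (mem_Ioi.mpr hs) W
          have hSt := hS t
          rw [← hsdef] at hSt
          have hmul : W₀ s * (1/(2*s) * (c * S t))
              ≤ W₀ s * (1/(2*s) * (c * (-(2*κx) * ((α * s^p + β * s^q)^k * s)))) := by
            apply mul_le_mul_of_nonneg_left _ (W0nonneg s)
            apply mul_le_mul_of_nonneg_left _ (by positivity)
            exact mul_le_mul_of_nonneg_left hSt hc.le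
          have heq : W₀ s * (1/(2*s) * (c * (-(2*κx) * ((α * s^p + β * s^q)^k * s))))
              = -(c * κx) := by
            rw [hW0s]
            field_simp
          rw [heq] at hmul
          linarith
        -- close both goals
        first
        | exact hΘd.differentiableAt.differentiableWithinAt
        | (rw [hΘd.deriv]; exact hderivle)
      }
    have hkey := hΘanti (left_mem_Icc.mpr hTc.le) (right_mem_Icc.mpr hTc.le) hTc.le
    simp only [hΘdef] at hkey
    have hPTc : 0 < P (Real.sqrt (c * V Tc)) := by
      have hVTc : 0 < V Tc := hVpos Tc (right_mem_Icc.mpr hTc.le)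
      have hsTc : 0 < Real.sqrt (c * V Tc) := Real.sqrt_pos.mpr (mul_pos hc hVTc)
      apply intervalIntegral.intervalIntegral_pos_of_pos_on W0int.intervalIntegrable
      · intro z hz
        have hz' : (0:ℝ) < z := hz.1
        have := Wpos z hz'
        rw [hW0def]
        rw [Set.indicator_of_mem (mem_Ioi.mpr hz') W]
        exact this
      · exact hsTc
    have hP0 : P (Real.sqrt (c * V 0)) ≤ γ := Pleγ _ (Real.sqrt_nonneg _)
    have hγle : γ ≤ c * κx * Tc := by
      rw [hcdef]
      rw [div_le_iff₀ (mul_pos hlam hTc)] at hκx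
      have h6 : lam / ↑N * κx * Tc * ↑N = κx * (lam * Tc) := by field_simp
      rw [show γ = γ * ↑N / ↑N by field_simp, div_le_iff₀ hN0, h6]
      linarith [hκx]
    nlinarith [hkey, hPTc, hP0, hγle]
  -- conclusion
  obtain ⟨t₀, ht₀, hVt₀⟩ := hexists
  intro t htT
  have hVt : V t = 0 := by
    have h1 : V t ≤ V t₀ := hVanti (mem_Ici.mpr ht₀.1) (mem_Ici.mpr (le_trans ht₀.1 (le_trans ht₀.2 htT)))
      (le_trans ht₀.2 htT)
    have h2 := Vnonneg t
    linarith [hVt₀ ▸ h1]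
  have hq := hquad (x t)
  have hxx : x t ⬝ᵥ x t = 0 := by
    have h1 : lam * (x t ⬝ᵥ x t) ≤ 0 := by
      rw [show (0:ℝ) = V t from hVt.symm]
      exact hq
    have h2 : (0:ℝ) ≤ x t ⬝ᵥ x t := Finset.sum_nonneg (fun i _ => mul_self_nonneg _)
    nlinarith
  funext i
  have h3 : ∑ j, x t j * x t j = 0 := hxx
  have h4 := (Finset.sum_eq_zero_iff_of_nonneg
    (fun j (_ : j ∈ Finset.univ) => mul_self_nonneg (x t j))).mp h3 i (Finset.mem_univ i)
  exact mul_self_eq_zero.mp h4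
end
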